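/- Define operators X, Y on the free Z-module with basis {e_{(i,j)} : i,j ∈ N} by X e_{(i,j)} = e_{(i+1,j)} + e_{(i+1,j−1)} + e_{(i−1,j+1)} + e_{(i−1,j)} and Y e_{(i,j)} = e_{(i,j+1)} + e_{(i+2,j−1)} + (1−δ_{0,i}) e_{(i,j)} + e_{(i−2,j+1)} + e_{(i,j−1)}, with e_{(a,b)} = 0 for a < 0 or b < 0. Then X and Y commute: XY = YX. -/
import Mathlib


/-- The basis element `e_{(a,b)}` of the free ℤ-module on `ℕ × ℕ`, with the convention
`e_{(a,b)} = 0` whenever `a < 0` or `b < 0`. -/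
noncomputable def eVec (a b : ℤ) : (ℕ × ℕ) →₀ ℤ :=
  if 0 ≤ a ∧ 0 ≤ b then Finsupp.single (a.toNat, b.toNat) 1 else 0

/-- The operator `X`: `X e_{(i,j)} = e_{(i+1,j)} + e_{(i+1,j−1)} + e_{(i−1,j+1)} + e_{(i−1,j)}`. -/
noncomputable def Xop : ((ℕ × ℕ) →₀ ℤ) →ₗ[ℤ] ((ℕ × ℕ) →₀ ℤ) :=
  Finsupp.lift _ ℤ (ℕ × ℕ) fun p =>
    eVec ((p.1 : ℤ) + 1) p.2 + eVec ((p.1 : ℤ) + 1) ((p.2 : ℤ) - 1) +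
      eVec ((p.1 : ℤ) - 1) ((p.2 : ℤ) + 1) + eVec ((p.1 : ℤ) - 1) p.2

/-- The operator `Y`:
`Y e_{(i,j)} = e_{(i,j+1)} + e_{(i+2,j−1)} + (1−δ_{0,i}) e_{(i,j)} + e_{(i−2,j+1)} + e_{(i,j−1)}`. -/
noncomputable def Yop : ((ℕ × ℕ) →₀ ℤ) →ₗ[ℤ] ((ℕ × ℕ) →₀ ℤ) :=
  Finsupp.lift _ ℤ (ℕ × ℕ) fun p =>
    eVec p.1 ((p.2 : ℤ) + 1) + eVec ((p.1 : ℤ) + 2) ((p.2 : ℤ) - 1) +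
      (if p.1 = 0 then 0 else eVec p.1 p.2) +
      eVec ((p.1 : ℤ) - 2) ((p.2 : ℤ) + 1) + eVec p.1 ((p.2 : ℤ) - 1)


lemma eVec_apply (a b : ℤ) (p q : ℕ) : eVec a b (p, q) = if a = p ∧ b = q then 1 else 0 := by
  unfold eVec
  split_ifs with h h2 h2 <;> simp_all [Finsupp.single_apply, Prod.ext_iff] <;> omega

lemma Xop_single (i j : ℕ) : Xop (Finsupp.single (i, j) 1) =
    eVec ((i : ℤ) + 1) j + eVec ((i : ℤ) + 1) ((j : ℤ) - 1) +
      eVec ((i : ℤ) - 1) ((j : ℤ) + 1) + eVec ((i : ℤ) - 1) j := by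
  simp [Xop, Finsupp.lift_apply, Finsupp.sum_single_index]

lemma Yop_single (i j : ℕ) : Yop (Finsupp.single (i, j) 1) =
    eVec i ((j : ℤ) + 1) + eVec ((i : ℤ) + 2) ((j : ℤ) - 1) +
      (if i = 0 then 0 else eVec i j) +
      eVec ((i : ℤ) - 2) ((j : ℤ) + 1) + eVec i ((j : ℤ) - 1) := by
  simp [Yop, Finsupp.lift_apply, Finsupp.sum_single_index]

lemma Xop_eVec (a b : ℤ) : Xop (eVec a b) =
    if 0 ≤ a ∧ 0 ≤ b then
      eVec (a + 1) b + eVec (a + 1) (b - 1) + eVec (a - 1) (b + 1) + eVec (a - 1) b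
    else 0 := by
  by_cases h : 0 ≤ a ∧ 0 ≤ b
  · have ha : ((a.toNat : ℤ)) = a := Int.toNat_of_nonneg h.1
    have hb : ((b.toNat : ℤ)) = b := Int.toNat_of_nonneg h.2
    rw [if_pos h, show eVec a b = Finsupp.single (a.toNat, b.toNat) 1 from if_pos h, Xop_single,
      ha, hb]
  · rw [if_neg h, show eVec a b = 0 from if_neg h, map_zero]

lemma Yop_eVec (a b : ℤ) : Yop (eVec a b) =
    if 0 ≤ a ∧ 0 ≤ b then
      eVec a (b + 1) + eVec (a + 2) (b - 1) + (if a = 0 then 0 else eVec a b) +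
        eVec (a - 2) (b + 1) + eVec a (b - 1)
    else 0 := by
  by_cases h : 0 ≤ a ∧ 0 ≤ b
  · obtain ⟨n, rfl⟩ := Int.eq_ofNat_of_zero_le h.1
    obtain ⟨m, rfl⟩ := Int.eq_ofNat_of_zero_le h.2
    rw [if_pos h, show eVec n m = Finsupp.single (n, m) 1 by simp [eVec], Yop_single]
    simp
    split_ifs <;> simp [eVec]
  · rw [if_neg h, show eVec a b = 0 from if_neg h, map_zero]

lemma hA (n : ℕ) (c : ℤ) (hc : 0 ≤ c) : (0 ≤ c + (n:ℤ)) = True := by simp; omega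

lemma hB (n : ℕ) (c : ℤ) (hc : 0 < c) : (c + (n:ℤ) = 0) = False := by simp; omega

lemma hC (n : ℕ) (c : ℤ) (hc : c < 0) : (c = (n:ℤ)) = False := by simp; omega

set_option maxHeartbeats 1000000 in
/-- The operators `X` and `Y` on the free ℤ-module with basis
`{e_{(i,j)} : i,j ∈ ℕ}` commute: `XY = YX`. -/
theorem Xop_Yop_comm : Xop ∘ₗ Yop = Yop ∘ₗ Xop := by
  ext ⟨i, j⟩ ⟨p, q⟩
  simp only [LinearMap.coe_comp, Function.comp_apply, Finsupp.lsingle_apply]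
  rw [Yop_single, Xop_single]
  simp only [map_add, apply_ite (fun v => Xop v), apply_ite (fun v => Yop v), map_zero,
    Xop_eVec, Yop_eVec]
  simp only [Finsupp.add_apply, apply_ite (fun f : (ℕ × ℕ) →₀ ℤ => f (p, q)),
    Finsupp.zero_apply, eVec_apply]
  rcases i with _ | _ | i <;> rcases j with _ | _ | j <;>
    (push_cast; ring_nf; norm_num [hA, hB, hC]; try omega)
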